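/- Let λ₁, λ₂ ∈ Δₙ↓ be ordered probability vectors. Then λ₁ ≺ λ₂ if and only if for every Hermitian matrix A, the interval [λ₁·λ↑(A), λ₁·λ↓(A)] is contained in [λ₂·λ↑(A), λ₂·λ↓(A)], where λ↓(A) and λ↑(A) are the eigenvalues of A in nonincreasing and nondecreasing order. -/

import Mathlib

open Matrix

/-- Partial sum of the first `k` entries. -/
def psum {n : ℕ} (x : Fin n → ℝ) (k : ℕ) : ℝ :=
  ∑ i ∈ Finset.univ.filter (fun i : Fin n => (i : ℕ) < k), x i

/-- Majorization for nonincreasingly ordered vectors. -/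
def MajS {n : ℕ} (x y : Fin n → ℝ) : Prop :=
  (∀ k, k < n → psum x k ≤ psum y k) ∧ (∑ i, x i = ∑ i, y i)

/-- Membership in `Δₙ↓`: nonnegative, nonincreasing, summing to 1. -/
def memDeltaDown {n : ℕ} (x : Fin n → ℝ) : Prop :=
  (∀ i, 0 ≤ x i) ∧ Antitone x ∧ ∑ i, x i = 1

/-- `x` rearranged in nondecreasing order. -/
noncomputable def sortAsc {n : ℕ} (x : Fin n → ℝ) : Fin n → ℝ := x ∘ (Tuple.sort x)

/-- `x` rearranged in nonincreasing order. -/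
noncomputable def sortDesc {n : ℕ} (x : Fin n → ℝ) : Fin n → ℝ := fun i => sortAsc x i.rev

/- ### Auxiliary lemmas -/

lemma psum_eq_sum_range {n : ℕ} (x : Fin n → ℝ) (m : ℕ) (hm : m ≤ n) :
    psum x m = ∑ j ∈ Finset.range m, (if h : j < n then x ⟨j, h⟩ else 0) := by
  unfold psum
  rw [Finset.sum_filter,
    Finset.sum_fin_eq_sum_range (fun i : Fin n => if (i : ℕ) < m then x i else 0)]
  have h1 : Finset.range m = (Finset.range n).filter (fun j => j < m) := by
    ext j
    simp only [Finset.mem_filter, Finset.mem_range]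
    omega
  rw [h1, Finset.sum_filter]
  apply Finset.sum_congr rfl
  intro j hj
  rw [Finset.mem_range] at hj
  simp [hj]

lemma psum_top {n : ℕ} (x : Fin n → ℝ) : psum x n = ∑ i, x i := by
  unfold psum
  rw [Finset.filter_true_of_mem (fun i _ => i.isLt)]

/-- Abel-summation consequence: pairing against an antitone vector respects majorization. -/
lemma sum_mul_le_of_maj {n : ℕ} {x y μ : Fin n → ℝ}
    (hk : ∀ k, k < n → psum x k ≤ psum y k) (hs : ∑ i, x i = ∑ i, y i)
    (hμ : Antitone μ) : ∑ i, x i * μ i ≤ ∑ i, y i * μ i := by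
  classical
  set F : ℕ → ℝ := fun j => if h : j < n then μ ⟨j, h⟩ else 0 with hF
  set X : ℕ → ℝ := fun j => if h : j < n then x ⟨j, h⟩ else 0 with hX
  set Y : ℕ → ℝ := fun j => if h : j < n then y ⟨j, h⟩ else 0 with hY
  have hx : ∑ i, x i * μ i = ∑ j ∈ Finset.range n, F j • X j := by
    rw [Finset.sum_fin_eq_sum_range (fun i => x i * μ i)]
    apply Finset.sum_congr rfl
    intro j hj
    rw [Finset.mem_range] at hj
    simp [hF, hX, hj, mul_comm]
  have hy : ∑ i, y i * μ i = ∑ j ∈ Finset.range n, F j • Y j := by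
    rw [Finset.sum_fin_eq_sum_range (fun i => y i * μ i)]
    apply Finset.sum_congr rfl
    intro j hj
    rw [Finset.mem_range] at hj
    simp [hF, hY, hj, mul_comm]
  rw [hx, hy, Finset.sum_range_by_parts F X n, Finset.sum_range_by_parts F Y n]
  have hXp : ∀ m, m ≤ n → ∑ j ∈ Finset.range m, X j = psum x m := fun m hm =>
    (psum_eq_sum_range x m hm).symm
  have hYp : ∀ m, m ≤ n → ∑ j ∈ Finset.range m, Y j = psum y m := fun m hm =>
    (psum_eq_sum_range y m hm).symm
  have htop : ∑ j ∈ Finset.range n, X j = ∑ j ∈ Finset.range n, Y j := by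
    rw [hXp n le_rfl, hYp n le_rfl, psum_top, psum_top, hs]
  rw [htop]
  apply sub_le_sub_left
  apply Finset.sum_le_sum
  intro i hi
  rw [Finset.mem_range] at hi
  have hi1 : i + 1 < n := by omega
  have hi0 : i < n := by omega
  rw [hXp (i + 1) (by omega), hYp (i + 1) (by omega)]
  have hFle : F (i + 1) - F i ≤ 0 := by
    simp only [hF, dif_pos hi1, dif_pos hi0]
    have := hμ (show (⟨i, hi0⟩ : Fin n) ≤ ⟨i + 1, hi1⟩ by simp [Fin.le_def])
    linarith
  have hpsle : psum y (i + 1) - psum x (i + 1) ≥ 0 := by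
    have := hk (i + 1) hi1
    linarith
  have : (F (i + 1) - F i) • psum y (i + 1) ≤ (F (i + 1) - F i) • psum x (i + 1) := by
    simp only [smul_eq_mul]
    nlinarith
  exact this

lemma monotone_sortAsc {n : ℕ} (f : Fin n → ℝ) : Monotone (sortAsc f) :=
  Tuple.monotone_sort f

lemma antitone_sortDesc {n : ℕ} (f : Fin n → ℝ) : Antitone (sortDesc f) := by
  intro i j hij
  exact monotone_sortAsc f (by simpa [Fin.rev_le_rev] using hij)

lemma sum_mul_sortAsc_le_sum_mul_sortDesc {n : ℕ} {l : Fin n → ℝ} (hl : Antitone l)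
    (f : Fin n → ℝ) : ∑ i, l i * sortAsc f i ≤ ∑ i, l i * sortDesc f i := by
  have hmono : Monovary l (sortDesc f) := hl.monovary (antitone_sortDesc f)
  have := hmono.sum_mul_comp_perm_le_sum_mul (σ := Fin.revPerm)
  simpa [sortDesc, Fin.rev_rev] using this

/-- A monotone 0-1 vector with sum `k` is the indicator of the last `k` coordinates. -/
lemma monotone_zero_one_eq {n k : ℕ} (hk : k ≤ n) (s : Fin n → ℝ) (hm : Monotone s)
    (h01 : ∀ i, s i = 0 ∨ s i = 1) (hsum : ∑ i, s i = k) :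
    ∀ i, s i = if (i : ℕ) < n - k then 0 else 1 := by
  classical
  set T : Finset (Fin n) := Finset.univ.filter (fun i => s i = 1) with hT
  have hcard : T.card = k := by
    have h1 : ∑ i, s i = T.card := by
      rw [← Finset.sum_filter_add_sum_filter_not Finset.univ (fun i => s i = 1) s]
      have ha : ∑ i ∈ T, s i = T.card := by
        rw [Finset.sum_congr rfl (fun i hi => by
          simp only [hT, Finset.mem_filter] at hi; exact hi.2)]
        simp
      have hb : ∑ i ∈ Finset.univ.filter (fun i => ¬ s i = 1), s i = 0 := by
        apply Finset.sum_eq_zero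
        intro i hi
        simp only [Finset.mem_filter] at hi
        rcases h01 i with h | h
        · exact h
        · exact absurd h hi.2
      rw [← hT] at *
      rw [ha, hb, add_zero]
    have : (T.card : ℝ) = (k : ℝ) := by rw [← h1, hsum]
    exact_mod_cast this
  intro i
  have hup : ∀ i j : Fin n, i ≤ j → s i = 1 → s j = 1 := by
    intro i j hij h1
    rcases h01 j with h | h
    · have := hm hij; rw [h1, h] at this; linarith
    · exact h
  by_cases hi : (i : ℕ) < n - k
  · rw [if_pos hi]
    rcases h01 i with h | h
    · exact h
    · exfalso
      have hsub : Finset.Ici i ⊆ T := by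
        intro j hj
        rw [Finset.mem_Ici] at hj
        simp only [hT, Finset.mem_filter, Finset.mem_univ, true_and]
        exact hup i j hj h
      have := Finset.card_le_card hsub
      rw [hcard, Fin.card_Ici] at this
      omega
  · rw [if_neg hi]
    rcases h01 i with h | h
    · exfalso
      have hsub : T ⊆ Finset.Ioi i := by
        intro j hj
        simp only [hT, Finset.mem_filter, Finset.mem_univ, true_and] at hj
        rw [Finset.mem_Ioi]
        by_contra hji
        push_neg at hji
        have := hup j i hji hj
        rw [h] at this; linarith
      have := Finset.card_le_card hsub
      rw [hcard, Fin.card_Ioi] at this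
      have := i.isLt
      omega
    · exact h

/-- The sum of the eigenvalues of a Hermitian matrix equals the trace. -/
lemma sum_eigenvalues_eq_trace {n : ℕ} (A : Matrix (Fin n) (Fin n) ℂ) (hA : A.IsHermitian) :
    ((∑ i, hA.eigenvalues i : ℝ) : ℂ) = A.trace := by
  conv_rhs => rw [hA.spectral_theorem]
  rw [Unitary.conjStarAlgAut_apply, Matrix.trace_mul_cycle]
  rw [Matrix.mem_unitaryGroup_iff'.mp (Matrix.IsHermitian.eigenvectorUnitary hA).2, one_mul,
    Matrix.trace_diagonal]
  push_cast
  rfl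

/-- `λ₁ ≺ λ₂` iff for every Hermitian `A` the interval `[λ₁·λ↑(A), λ₁·λ↓(A)]` is contained in
`[λ₂·λ↑(A), λ₂·λ↓(A)]`. -/
theorem maj_iff_forall_interval_subset {n : ℕ} (l₁ l₂ : Fin n → ℝ)
    (h₁ : memDeltaDown l₁) (h₂ : memDeltaDown l₂) :
    MajS l₁ l₂ ↔
      ∀ (A : Matrix (Fin n) (Fin n) ℂ) (hA : A.IsHermitian),
        Set.Icc (∑ i, l₁ i * sortAsc hA.eigenvalues i) (∑ i, l₁ i * sortDesc hA.eigenvalues i) ⊆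
        Set.Icc (∑ i, l₂ i * sortAsc hA.eigenvalues i) (∑ i, l₂ i * sortDesc hA.eigenvalues i) := by
  constructor
  · rintro ⟨hmaj, hsum⟩ A hA
    apply Set.Icc_subset_Icc
    · -- lower endpoints: l₂·asc ≤ l₁·asc
      have := sum_mul_le_of_maj hmaj hsum (μ := fun i => -(sortAsc hA.eigenvalues i))
        (fun i j hij => neg_le_neg (monotone_sortAsc hA.eigenvalues hij))
      simp only [mul_neg, Finset.sum_neg_distrib, neg_le_neg_iff] at this
      linarith
    · exact sum_mul_le_of_maj hmaj hsum (antitone_sortDesc hA.eigenvalues)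
  · intro H
    refine ⟨?_, h₁.2.2.trans h₂.2.2.symm⟩
    intro k hkn
    classical
    set μ : Fin n → ℝ := fun i => if (i : ℕ) < k then 1 else 0 with hμdef
    set A : Matrix (Fin n) (Fin n) ℂ := Matrix.diagonal (fun i => ((μ i : ℝ) : ℂ)) with hAdef
    have hA : A.IsHermitian := by
      apply Matrix.isHermitian_diagonal_of_self_adjoint
      funext i
      exact Complex.conj_ofReal (μ i)
    set e : Fin n → ℝ := hA.eigenvalues with hedef
    -- Step 1: each eigenvalue is 0 or 1
    have h01 : ∀ i, e i = 0 ∨ e i = 1 := by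
      intro i
      have hmem : e i ∈ spectrum ℝ A := hA.eigenvalues_mem_spectrum_real i
      have : ((e i : ℝ) : ℂ) ∈ spectrum ℂ A := by
        rw [show ((e i : ℝ) : ℂ) = algebraMap ℝ ℂ (e i) from rfl,
          spectrum.algebraMap_mem_iff]
        exact hmem
      rw [hAdef, spectrum_diagonal] at this
      obtain ⟨j, hj⟩ := this
      have hj2 : ((μ j : ℝ) : ℂ) = ((e i : ℝ) : ℂ) := hj
      have hj' : μ j = e i := by exact_mod_cast hj2
      rcases (show μ j = 1 ∨ μ j = 0 by
          by_cases h : (j : ℕ) < k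
          · left; simp [hμdef, h]
          · right; simp [hμdef, h]) with h | h
      · right; rw [← hj', h]
      · left; rw [← hj', h]
    -- Step 2: the eigenvalues sum to k
    have hsum_e : ∑ i, e i = k := by
      have h1 : ((∑ i, e i : ℝ) : ℂ) = A.trace := sum_eigenvalues_eq_trace A hA
      have h2 : A.trace = ((∑ i, μ i : ℝ) : ℂ) := by
        rw [hAdef, Matrix.trace_diagonal]
        push_cast
        rfl
      have h3 : ∑ i, μ i = k := by
        show (∑ i : Fin n, if (i : ℕ) < k then (1:ℝ) else 0) = k
        rw [← Finset.sum_filter, Finset.sum_const, nsmul_eq_mul, mul_one]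
        have hc : (Finset.univ.filter (fun i : Fin n => (i : ℕ) < k)) =
            Finset.Iio (⟨k, hkn⟩ : Fin n) := by
          ext j
          simp [Finset.mem_Iio, Fin.lt_def]
        rw [hc, Fin.card_Iio]
      have h4 : ((∑ i, e i : ℝ) : ℂ) = ((k : ℝ) : ℂ) := by rw [h1, h2, h3]
      exact_mod_cast h4
    -- Step 3: identify the sorted eigenvalues
    have hasc : ∀ i, sortAsc e i = if (i : ℕ) < n - k then 0 else 1 := by
      apply monotone_zero_one_eq (le_of_lt hkn) _ (monotone_sortAsc e)
      · intro i; exact h01 _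
      · rw [show ∑ i, sortAsc e i = ∑ i, e i from
          Equiv.sum_comp (Tuple.sort e) e, hsum_e]
    have hdesc : ∀ i, sortDesc e i = μ i := by
      intro i
      rw [sortDesc, hasc]
      have h1 : (i.rev : ℕ) = n - 1 - (i : ℕ) := by
        rw [Fin.val_rev]
        omega
      have h2 := i.isLt
      simp only [hμdef, h1]
      rcases Nat.lt_or_ge (i : ℕ) k with h | h
      · rw [if_neg (by omega), if_pos h]
      · rw [if_pos (by omega), if_neg (by omega)]
    -- Step 4: conclude using the interval inclusion
    have hpdesc : ∀ l : Fin n → ℝ, ∑ i, l i * sortDesc e i = psum l k := by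
      intro l
      rw [Finset.sum_congr rfl (fun i _ => by rw [hdesc i])]
      unfold psum
      rw [Finset.sum_filter]
      apply Finset.sum_congr rfl
      intro i _
      show l i * μ i = _
      by_cases h : (i : ℕ) < k <;> simp [hμdef, h]
    have hmem : (∑ i, l₁ i * sortDesc e i) ∈
        Set.Icc (∑ i, l₁ i * sortAsc e i) (∑ i, l₁ i * sortDesc e i) :=
      ⟨sum_mul_sortAsc_le_sum_mul_sortDesc h₁.2.1 e, le_refl _⟩
    have := (H A hA hmem).2
    rw [hpdesc l₁, hpdesc l₂] at this
    exact this
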